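/- Let σ ⊂ N_ℚ be a strongly convex rational polyhedral cone, R = ℂ[σ^∨ ∩ M] the corresponding semigroup algebra, ρ an extremal ray of σ, and e ∈ S_ρ. Then the ℂ-linear map ∂_{ρ,e} : R → R sending χ^m to ⟨m,ρ⟩·χ^{e+m} is a locally nilpotent derivation of R, homogeneous of degree e. -/

import Mathlib

namespace Stmt6

variable (n : ℕ)

/-- The pairing `M × N → ℤ`. -/
def pairZ (m v : Fin n → ℤ) : ℤ := ∑ i, m i * v i

def castQ (v : Fin n → ℤ) : Fin n → ℚ := fun i => (v i : ℚ)

/-- Membership in the rational cone generated by `gens ⊆ N`. -/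
def InCone (gens : Finset (Fin n → ℤ)) (v : Fin n → ℚ) : Prop :=
  ∃ c : (Fin n → ℤ) → ℚ, (∀ g, 0 ≤ c g) ∧ v = ∑ g ∈ gens, c g • castQ n g

/-- The dual semigroup `σ^∨ ∩ M` of the cone generated by `gens`. -/
def dualSG (gens : Finset (Fin n → ℤ)) : Set (Fin n → ℤ) :=
  {m | ∀ g ∈ gens, 0 ≤ pairZ n m g}

/-- The homogeneous map `∂_{ρ,e} : χ^m ↦ ⟨m,ρ⟩ χ^{e+m}` on the Laurent polynomial ring
`ℂ[M]`, of degree `e`. -/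
noncomputable def D (ρ e : Fin n → ℤ) :
    AddMonoidAlgebra ℂ (Fin n → ℤ) → AddMonoidAlgebra ℂ (Fin n → ℤ) :=
  fun x => Finsupp.sum x.coeff fun m c =>
    AddMonoidAlgebra.single (e + m) (((pairZ n m ρ : ℤ) : ℂ) * c)

/-- `x` lies in the semigroup algebra `R = ℂ[σ^∨ ∩ M] ⊆ ℂ[M]`. -/
def memR (gens : Finset (Fin n → ℤ)) (x : AddMonoidAlgebra ℂ (Fin n → ℤ)) : Prop :=
  ∀ m ∈ x.coeff.support, m ∈ dualSG n gens


section Aux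
variable (n : ℕ)

lemma pairZ_add (a b v : Fin n → ℤ) : pairZ n (a + b) v = pairZ n a v + pairZ n b v := by
  simp [pairZ, add_mul, Finset.sum_add_distrib]

lemma pairZ_nsmul (k : ℕ) (a v : Fin n → ℤ) : pairZ n (k • a) v = k * pairZ n a v := by
  simp [pairZ, Finset.mul_sum, mul_assoc]

lemma D_single (ρ e m : Fin n → ℤ) (c : ℂ) :
    D n ρ e (AddMonoidAlgebra.single m c) =
      AddMonoidAlgebra.single (e + m) (((pairZ n m ρ : ℤ) : ℂ) * c) := by
  simp [D, Finsupp.sum_single_index]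

lemma D_zero (ρ e : Fin n → ℤ) : D n ρ e 0 = 0 := by
  simp [D]

lemma D_add (ρ e : Fin n → ℤ) (x y : AddMonoidAlgebra ℂ (Fin n → ℤ)) :
    D n ρ e (x + y) = D n ρ e x + D n ρ e y := by
  unfold D
  rw [AddMonoidAlgebra.coeff_add, Finsupp.sum_add_index] <;> simp [mul_add]

lemma D_smul (ρ e : Fin n → ℤ) (c : ℂ) (x : AddMonoidAlgebra ℂ (Fin n → ℤ)) :
    D n ρ e (c • x) = c • D n ρ e x := by
  unfold D
  rw [AddMonoidAlgebra.coeff_smul, Finsupp.sum_smul_index (by simp), Finsupp.smul_sum]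
  refine Finsupp.sum_congr fun m _ => ?_
  rw [AddMonoidAlgebra.smul_single, smul_eq_mul, mul_left_comm]

lemma D_support (ρ e : Fin n → ℤ) (x : AddMonoidAlgebra ℂ (Fin n → ℤ)) :
    ∀ m' ∈ (D n ρ e x).coeff.support, ∃ m ∈ x.coeff.support, pairZ n m ρ ≠ 0 ∧ m' = e + m := by
  intro m' hm'
  classical
  rw [D, AddMonoidAlgebra.coeff_finsuppSum] at hm'
  obtain ⟨m, hm, hmem⟩ := Finset.mem_biUnion.mp (Finsupp.support_sum hm')
  refine ⟨m, hm, ?_, ?_⟩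
  · intro h0
    simp [h0] at hmem
  · have := Finsupp.mem_support_iff.mp hmem
    by_contra hne
    rw [AddMonoidAlgebra.coeff_single, Finsupp.single_apply, if_neg (by exact fun h => hne h.symm)] at this
    exact this rfl

lemma D_mul (ρ e : Fin n → ℤ) (x y : AddMonoidAlgebra ℂ (Fin n → ℤ)) :
    D n ρ e (x * y) = D n ρ e x * y + x * D n ρ e y := by
  induction x using AddMonoidAlgebra.induction_linear with
  | zero => simp [D_zero]
  | add a b ha hb =>
    rw [add_mul, D_add, D_add, ha, hb, add_mul]
    ring
  | single m c =>
    induction y using AddMonoidAlgebra.induction_linear with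
    | zero => simp [D_zero]
    | add a b ha hb =>
      rw [mul_add, D_add, D_add, ha, hb, mul_add]
      ring
    | single m' c' =>
      rw [AddMonoidAlgebra.single_mul_single, D_single, D_single, D_single,
        AddMonoidAlgebra.single_mul_single, AddMonoidAlgebra.single_mul_single]
      have h1 : e + m + m' = e + (m + m') := by abel
      have h2 : m + (e + m') = e + (m + m') := by abel
      rw [h1, h2, ← AddMonoidAlgebra.single_add]
      congr 1
      rw [pairZ_add]
      push_cast
      ring

lemma D_memR (gens : Finset (Fin n → ℤ)) (ρ e : Fin n → ℤ)
    (hE : ∀ m ∈ dualSG n gens, pairZ n m ρ ≠ 0 → e + m ∈ dualSG n gens)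
    (x : AddMonoidAlgebra ℂ (Fin n → ℤ)) (hx : memR n gens x) :
    memR n gens (D n ρ e x) := by
  intro m' hm'
  obtain ⟨m, hm, hne, rfl⟩ := D_support n ρ e x m' hm'
  exact hE m (hx m hm) hne

lemma D_iter (gens : Finset (Fin n → ℤ)) (ρ e : Fin n → ℤ)
    (hE : ∀ m ∈ dualSG n gens, pairZ n m ρ ≠ 0 → e + m ∈ dualSG n gens)
    (x : AddMonoidAlgebra ℂ (Fin n → ℤ)) (hx : memR n gens x) (k : ℕ) :
    memR n gens ((D n ρ e)^[k] x) ∧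
      ∀ m' ∈ ((D n ρ e)^[k] x).coeff.support, ∃ m ∈ x.coeff.support, m' = k • e + m := by
  induction k with
  | zero => exact ⟨hx, fun m' hm' => ⟨m', hm', by simp⟩⟩
  | succ k ih =>
    rw [Function.iterate_succ_apply']
    refine ⟨D_memR n gens ρ e hE _ ih.1, fun m' hm' => ?_⟩
    obtain ⟨m₁, hm₁, _, rfl⟩ := D_support n ρ e _ m' hm'
    obtain ⟨m, hm, rfl⟩ := ih.2 m₁ hm₁
    exact ⟨m, hm, by rw [succ_nsmul]; abel⟩

end Aux

/-- Let `σ ⊆ N_ℚ` be a strongly convex rational polyhedral cone with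
generator set `gens`, `R = ℂ[σ^∨ ∩ M]`, `ρ ∈ gens` an extremal ray of `σ`, and
`e ∈ S_ρ`. Then `∂_{ρ,e} : χ^m ↦ ⟨m,ρ⟩ χ^{e+m}` is a ℂ-linear derivation of `R`,
homogeneous of degree `e`, and locally nilpotent. -/
theorem stmt_6 (gens : Finset (Fin n → ℤ))
    (hconv : ∀ v : Fin n → ℚ, InCone n gens v → InCone n gens (-v) → v = 0)
    (ρ : Fin n → ℤ) (hρ : ρ ∈ gens) (hρ0 : ρ ≠ 0)
    (hextremal : ∀ u w : Fin n → ℚ, InCone n gens u → InCone n gens w →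
      (∃ q : ℚ, 0 ≤ q ∧ u + w = q • castQ n ρ) → ∃ q₁ : ℚ, 0 ≤ q₁ ∧ u = q₁ • castQ n ρ)
    (e : Fin n → ℤ)
    (he : e ∉ dualSG n gens ∧
      ∀ m ∈ dualSG n gens, pairZ n m ρ ≠ 0 → e + m ∈ dualSG n gens) :
    -- ∂ is ℂ-linear
    IsLinearMap ℂ (D n ρ e) ∧
    -- ∂ is homogeneous of degree `e`
    (∀ (m : Fin n → ℤ) (c : ℂ), D n ρ e (AddMonoidAlgebra.single m c) =
        AddMonoidAlgebra.single (e + m) (((pairZ n m ρ : ℤ) : ℂ) * c)) ∧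
    -- ∂ maps `R` into `R`
    (∀ x, memR n gens x → memR n gens (D n ρ e x)) ∧
    -- Leibniz rule on `R`
    (∀ x y, memR n gens x → memR n gens y →
        D n ρ e (x * y) = D n ρ e x * y + x * D n ρ e y) ∧
    -- local nilpotency on `R`
    (∀ x, memR n gens x → ∃ k : ℕ, (D n ρ e)^[k] x = 0) := by
  classical
  have hE := he.2
  refine ⟨⟨D_add n ρ e, D_smul n ρ e⟩, D_single n ρ e, D_memR n gens ρ e hE,
    fun x y _ _ => D_mul n ρ e x y, fun x hx => ?_⟩
  -- local nilpotency
  have : ∃ g ∈ gens, pairZ n e g < 0 := by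
    by_contra h
    push_neg at h
    exact he.1 fun g hg => h g hg
  obtain ⟨g, hg, hneg⟩ := this
  set S : ℕ := x.coeff.support.sup fun m => (pairZ n m g).toNat with hS
  refine ⟨S + 1, ?_⟩
  obtain ⟨hmem, hsupp⟩ := D_iter n gens ρ e hE x hx (S + 1)
  rw [← AddMonoidAlgebra.coeff_eq_zero, ← Finsupp.support_eq_empty]
  rw [Finset.eq_empty_iff_forall_notMem]
  intro m' hm'
  have h0 : 0 ≤ pairZ n m' g := hmem m' hm' g hg
  obtain ⟨m, hm, rfl⟩ := hsupp m' hm'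
  rw [pairZ_add, pairZ_nsmul] at h0
  have h1 : (pairZ n m g).toNat ≤ S := Finset.le_sup (f := fun m => (pairZ n m g).toNat) hm
  have h2 : pairZ n m g ≤ ((pairZ n m g).toNat : ℤ) := Int.self_le_toNat _
  have h3 : ((S : ℤ) + 1) * pairZ n e g ≤ ((S : ℤ) + 1) * (-1) := by
    apply mul_le_mul_of_nonneg_left (by omega) (by positivity)
  push_cast at h0 h1 h2 ⊢
  linarith

end Stmt6
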